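/- Let G = (V,E) be a (2,2)-circuit and v a degree-3 vertex with neighbours x, y, z. If the edge xy is not in E, then the graph G - v + xy (delete v and its three incident edges, then add edge xy) contains a unique (2,2)-circuit as a subgraph; moreover this unique circuit equals G - v + xy itself if and only if G - v + xy is a (2,2)-circuit. -/

import Mathlib

open Set

/-- Push a subgraph of a graph on a subtype to a subgraph of `G`. -/
private def pushSub {V : Type*} {v : V} {G : SimpleGraph V}
    {G' : SimpleGraph {u : V // u ≠ v}} (K : G'.Subgraph)
    (h : ∀ a b : {u : V // u ≠ v}, K.Adj a b → G.Adj a.1 b.1) : G.Subgraph where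
  verts := Subtype.val '' K.verts
  Adj a b := ∃ (ha : a ≠ v) (hb : b ≠ v), K.Adj ⟨a, ha⟩ ⟨b, hb⟩
  adj_sub := by rintro a b ⟨ha, hb, hab⟩; exact h _ _ hab
  edge_vert := by rintro a b ⟨ha, hb, hab⟩; exact ⟨⟨a, ha⟩, K.edge_vert hab, rfl⟩
  symm := ⟨by rintro a b ⟨ha, hb, hab⟩; exact ⟨hb, ha, hab.symm⟩⟩

private lemma pushSub_edgeSet {V : Type*} {v : V} {G : SimpleGraph V}
    {G' : SimpleGraph {u : V // u ≠ v}} (K : G'.Subgraph)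
    (h : ∀ a b : {u : V // u ≠ v}, K.Adj a b → G.Adj a.1 b.1) :
    (pushSub K h).edgeSet = Sym2.map Subtype.val '' K.edgeSet := by
  ext e
  induction e with
  | _ a b =>
    simp only [SimpleGraph.Subgraph.mem_edgeSet, Set.mem_image]
    constructor
    · rintro ⟨ha, hb, hab⟩
      exact ⟨s(⟨a, ha⟩, ⟨b, hb⟩), SimpleGraph.Subgraph.mem_edgeSet.2 hab, rfl⟩
    · rintro ⟨e, he, hme⟩
      induction e with
      | _ a' b' =>
        rw [Sym2.map_pair_eq, Sym2.eq_iff] at hme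
        rcases hme with ⟨rfl, rfl⟩ | ⟨rfl, rfl⟩
        · exact ⟨a'.2, b'.2, SimpleGraph.Subgraph.mem_edgeSet.1 he⟩
        · exact ⟨b'.2, a'.2, (SimpleGraph.Subgraph.mem_edgeSet.1 he).symm⟩

private lemma subgraph_eq_of_verts_edgeSet {V : Type*} {G : SimpleGraph V}
    {H K : G.Subgraph} (hv : H.verts = K.verts) (he : H.edgeSet = K.edgeSet) :
    H = K := by
  refine SimpleGraph.Subgraph.ext hv ?_
  ext a b
  rw [← SimpleGraph.Subgraph.mem_edgeSet, ← SimpleGraph.Subgraph.mem_edgeSet, he]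
/-- A graph `G` on the finite vertex type `V` is a `(2,2)`-circuit if
`|E| = 2|V| - 1` and every proper subgraph `(V',E')` with `E'` nonempty
satisfies `|E'| ≤ 2|V'| - 2`. -/
def IsCircuit22 {V : Type*} [Fintype V] (G : SimpleGraph V) : Prop :=
  G.edgeSet.ncard + 1 = 2 * Fintype.card V ∧
  ∀ H : G.Subgraph, (H.verts ≠ Set.univ ∨ H.edgeSet ≠ G.edgeSet) →
    H.edgeSet.Nonempty → H.edgeSet.ncard + 2 ≤ 2 * H.verts.ncard

/-- A subgraph `H` of `G` is (as an abstract graph on its vertex set) a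
`(2,2)`-circuit. -/
def SubIsCircuit22 {V : Type*} {G : SimpleGraph V} (H : G.Subgraph) : Prop :=
  H.edgeSet.ncard + 1 = 2 * H.verts.ncard ∧
  ∀ K : G.Subgraph, K ≤ H → (K.verts ≠ H.verts ∨ K.edgeSet ≠ H.edgeSet) →
    K.edgeSet.Nonempty → K.edgeSet.ncard + 2 ≤ 2 * K.verts.ncard

/-- Let `G` be a `(2,2)`-circuit, `v` a degree-3 vertex with neighbours `x,y,z`
and `xy ∉ E`.  Then the graph `G' = G - v + xy` (on the vertex subtype
`{u // u ≠ v}`) contains a unique `(2,2)`-circuit as a subgraph, and this unique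
circuit is all of `G'` if and only if `G'` is itself a `(2,2)`-circuit. -/
theorem oneReduction_unique_circuit {V : Type*} [Fintype V] [DecidableEq V]
    (G : SimpleGraph V) [DecidableRel G.Adj] (hG : IsCircuit22 G)
    (v x y z : V) (hdeg : G.degree v = 3)
    (hnbr : G.neighborSet v = {x, y, z}) (hxy : ¬ G.Adj x y)
    (G' : SimpleGraph {u : V // u ≠ v})
    (hG' : ∀ a b : {u : V // u ≠ v}, G'.Adj a b ↔
      (G.Adj a.1 b.1 ∨ (a.1 = x ∧ b.1 = y) ∨ (a.1 = y ∧ b.1 = x))) :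
    (∃! H : G'.Subgraph, SubIsCircuit22 H) ∧
    (∀ H : G'.Subgraph, SubIsCircuit22 H → (H = ⊤ ↔ IsCircuit22 G')) := by
  classical
  have hxadj : G.Adj v x := by
    rw [← SimpleGraph.mem_neighborSet, hnbr]; simp
  have hyadj : G.Adj v y := by
    rw [← SimpleGraph.mem_neighborSet, hnbr]; simp
  have hxv : x ≠ v := hxadj.ne'
  have hyv : y ≠ v := hyadj.ne'
  set x' : {u : V // u ≠ v} := ⟨x, hxv⟩ with hx'def
  set y' : {u : V // u ≠ v} := ⟨y, hyv⟩ with hy'def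
  have hxyne : x ≠ y := by
    intro hh
    exact G'.loopless.irrefl x' ((hG' x' x').mpr (Or.inr (Or.inl ⟨rfl, hh ▸ rfl⟩)))
  have hadjxy : G'.Adj x' y' := (hG' x' y').mpr (Or.inr (Or.inl ⟨rfl, rfl⟩))
  -- transfer of sparsity for subgraphs avoiding the new edge
  have sparse_noxy : ∀ K : G'.Subgraph, s(x', y') ∉ K.edgeSet → K.edgeSet.Nonempty →
      K.edgeSet.ncard + 2 ≤ 2 * K.verts.ncard := by
    intro K hK hne
    have hadj : ∀ a b : {u : V // u ≠ v}, K.Adj a b → G.Adj a.1 b.1 := by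
      intro a b hab
      rcases (hG' a b).1 (K.adj_sub hab) with h | ⟨h1, h2⟩ | ⟨h1, h2⟩
      · exact h
      · exfalso; apply hK
        have ha : a = x' := Subtype.ext h1
        have hb : b = y' := Subtype.ext h2
        rw [← ha, ← hb]
        exact SimpleGraph.Subgraph.mem_edgeSet.2 hab
      · exfalso; apply hK
        have ha : a = y' := Subtype.ext h1
        have hb : b = x' := Subtype.ext h2
        rw [Sym2.eq_swap, ← ha, ← hb]
        exact SimpleGraph.Subgraph.mem_edgeSet.2 hab
    have hE : (pushSub K hadj).edgeSet.ncard = K.edgeSet.ncard := by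
      rw [pushSub_edgeSet,
        Set.ncard_image_of_injective _ (Sym2.map.injective Subtype.val_injective)]
    have hV : (pushSub K hadj).verts.ncard = K.verts.ncard :=
      Set.ncard_image_of_injective _ Subtype.val_injective
    have hproper : (pushSub K hadj).verts ≠ Set.univ := by
      intro hh
      have hv : v ∈ (pushSub K hadj).verts := hh ▸ Set.mem_univ v
      obtain ⟨u, _, hu⟩ := hv
      exact u.2 hu
    have hLne : (pushSub K hadj).edgeSet.Nonempty := by
      rw [pushSub_edgeSet]; exact hne.image _
    have := hG.2 (pushSub K hadj) (Or.inl hproper) hLne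
    rwa [hE, hV] at this
  -- every nonempty subgraph of G' satisfies |E| + 1 ≤ 2|V|
  have sparse' : ∀ K : G'.Subgraph, K.edgeSet.Nonempty →
      K.edgeSet.ncard + 1 ≤ 2 * K.verts.ncard := by
    intro K hne
    by_cases hxyK : s(x', y') ∈ K.edgeSet
    · have hE2 : (K.deleteEdges {s(x', y')}).edgeSet = K.edgeSet \ {s(x', y')} := by
        ext e
        induction e with
        | _ a b =>
          simp only [SimpleGraph.Subgraph.mem_edgeSet,
            SimpleGraph.Subgraph.deleteEdges_adj, Set.mem_diff, Set.mem_singleton_iff]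
      have hE2' : (K.deleteEdges {s(x', y')}).edgeSet.ncard + 1 = K.edgeSet.ncard := by
        rw [hE2]; exact Set.ncard_diff_singleton_add_one hxyK (Set.toFinite _)
      have hnotin : s(x', y') ∉ (K.deleteEdges {s(x', y')}).edgeSet := by
        rw [hE2]; simp
      by_cases h2 : (K.deleteEdges {s(x', y')}).edgeSet.Nonempty
      · have hsp := sparse_noxy _ hnotin h2
        have hv2 : (K.deleteEdges {s(x', y')}).verts = K.verts :=
          SimpleGraph.Subgraph.deleteEdges_verts _
        rw [hv2] at hsp
        omega
      · have hsing : K.edgeSet = {s(x', y')} := by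
          ext e
          constructor
          · intro he
            by_contra hne'
            exact h2 ⟨e, by rw [hE2]; exact ⟨he, hne'⟩⟩
          · intro he
            rw [Set.mem_singleton_iff] at he
            rw [he]; exact hxyK
        have hcard1 : K.edgeSet.ncard = 1 := by rw [hsing]; exact Set.ncard_singleton _
        have hvne : K.verts.Nonempty :=
          ⟨x', K.edge_vert (SimpleGraph.Subgraph.mem_edgeSet.1 hxyK)⟩
        have : 0 < K.verts.ncard := (Set.ncard_pos (Set.toFinite _)).2 hvne
        omega
    · have := sparse_noxy K hxyK hne
      omega
  -- counting: the edge count of G'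
  have hinc_card : (G.incidenceSet v).ncard = 3 := by
    rw [Set.ncard_eq_toFinset_card', Set.toFinset_card,
      SimpleGraph.card_incidenceSet_eq_degree, hdeg]
  have himg : Sym2.map Subtype.val '' G'.edgeSet
      = (G.edgeSet \ G.incidenceSet v) ∪ {s(x, y)} := by
    ext e
    constructor
    · rintro ⟨e', he', rfl⟩
      induction e' with
      | _ a b =>
        rw [SimpleGraph.mem_edgeSet] at he'
        rw [Sym2.map_pair_eq]
        rcases (hG' a b).1 he' with h | ⟨h1, h2⟩ | ⟨h1, h2⟩
        · left
          refine ⟨(SimpleGraph.mem_edgeSet _).2 h, ?_⟩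
          intro hmem
          rcases (SimpleGraph.mk'_mem_incidenceSet_iff G).1 hmem with ⟨_, hv | hv⟩
          · exact a.2 hv.symm
          · exact b.2 hv.symm
        · right; rw [h1, h2]; rfl
        · right; rw [h1, h2, Sym2.eq_swap]; rfl
    · intro he
      induction e with
      | _ a b =>
        rcases he with ⟨he, hni⟩ | he
        · have hadj : G.Adj a b := (SimpleGraph.mem_edgeSet _).1 he
          have ha : a ≠ v := by
            intro hh
            exact hni ((SimpleGraph.mk'_mem_incidenceSet_iff G).2 ⟨hadj, Or.inl hh.symm⟩)
          have hb : b ≠ v := by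
            intro hh
            exact hni ((SimpleGraph.mk'_mem_incidenceSet_iff G).2 ⟨hadj, Or.inr hh.symm⟩)
          exact ⟨s(⟨a, ha⟩, ⟨b, hb⟩),
            (SimpleGraph.mem_edgeSet _).2 ((hG' _ _).mpr (Or.inl hadj)), by rw [Sym2.map_pair_eq]⟩
        · rw [Set.mem_singleton_iff] at he
          rw [he]
          exact ⟨s(x', y'), (SimpleGraph.mem_edgeSet _).2 hadjxy, by rw [Sym2.map_pair_eq]⟩
  have hEG' : G'.edgeSet.ncard + 2 = G.edgeSet.ncard := by
    have h1 : (Sym2.map (Subtype.val : {u : V // u ≠ v} → V) '' G'.edgeSet).ncard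
        = G'.edgeSet.ncard :=
      Set.ncard_image_of_injective _ (Sym2.map.injective Subtype.val_injective)
    have h2 : s(x, y) ∉ G.edgeSet := fun h => hxy ((SimpleGraph.mem_edgeSet _).1 h)
    have h3 : ((G.edgeSet \ G.incidenceSet v) ∪ {s(x, y)}).ncard
        = (G.edgeSet \ G.incidenceSet v).ncard + 1 := by
      rw [Set.union_singleton,
        Set.ncard_insert_of_notMem (fun h => h2 h.1) (Set.toFinite _)]
    have h4 : (G.edgeSet \ G.incidenceSet v).ncard + 3 = G.edgeSet.ncard := by
      have h5 := Set.ncard_diff_add_ncard_of_subset (G.incidenceSet_subset v) (Set.toFinite _)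
      rw [hinc_card] at h5
      exact h5
    rw [himg, h3] at h1
    omega
  have hcard : Fintype.card {u : V // u ≠ v} + 1 = Fintype.card V := by
    have h1 : Fintype.card {u : V // ¬ u = v} = Fintype.card V - Fintype.card {u : V // u = v} :=
      Fintype.card_subtype_compl _
    have h2 : Fintype.card {u : V // u = v} = 1 := Fintype.card_subtype_eq v
    have h3 : 0 < Fintype.card V := Fintype.card_pos_iff.2 ⟨v⟩
    have : Fintype.card {u : V // u ≠ v} = Fintype.card V - Fintype.card {u : V // u = v} := h1
    omega
  have hG1 := hG.1
  have htopE : (⊤ : G'.Subgraph).edgeSet.ncard + 1 = 2 * (⊤ : G'.Subgraph).verts.ncard := by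
    have hu : ((Set.univ : Set {u : V // u ≠ v})).ncard = Fintype.card {u : V // u ≠ v} := by
      rw [Set.ncard_univ, Nat.card_eq_fintype_card]
    rw [SimpleGraph.Subgraph.edgeSet_top, SimpleGraph.Subgraph.verts_top, hu]
    omega
  have htopxy : s(x', y') ∈ (⊤ : G'.Subgraph).edgeSet := by
    rw [SimpleGraph.Subgraph.edgeSet_top]
    exact (SimpleGraph.mem_edgeSet _).2 hadjxy
  -- existence of a circuit: minimize |E| + |V| over "bad" subgraphs
  have hSne : {m | ∃ H : G'.Subgraph, (H.edgeSet.Nonempty ∧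
      2 * H.verts.ncard ≤ H.edgeSet.ncard + 1) ∧ H.edgeSet.ncard + H.verts.ncard = m}.Nonempty :=
    ⟨_, ⊤, ⟨⟨_, htopxy⟩, by omega⟩, rfl⟩
  obtain ⟨H₀, hH₀bad, hH₀m⟩ := Nat.sInf_mem hSne
  have hmin : ∀ K : G'.Subgraph, (K.edgeSet.Nonempty ∧ 2 * K.verts.ncard ≤ K.edgeSet.ncard + 1) →
      H₀.edgeSet.ncard + H₀.verts.ncard ≤ K.edgeSet.ncard + K.verts.ncard := by
    intro K hK
    rw [hH₀m]
    exact Nat.sInf_le ⟨K, hK, rfl⟩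
  have hH₀circ : SubIsCircuit22 H₀ := by
    refine ⟨le_antisymm (sparse' H₀ hH₀bad.1) hH₀bad.2, ?_⟩
    intro K hKle hKprop hKne
    by_contra hcon
    push_neg at hcon
    have hKbad : K.edgeSet.Nonempty ∧ 2 * K.verts.ncard ≤ K.edgeSet.ncard + 1 :=
      ⟨hKne, by omega⟩
    have hEle : K.edgeSet.ncard ≤ H₀.edgeSet.ncard :=
      Set.ncard_le_ncard (SimpleGraph.Subgraph.edgeSet_mono hKle) (Set.toFinite _)
    have hVle : K.verts.ncard ≤ H₀.verts.ncard :=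
      Set.ncard_le_ncard (SimpleGraph.Subgraph.verts_mono hKle) (Set.toFinite _)
    have hsum := hmin K hKbad
    have hE : K.edgeSet = H₀.edgeSet :=
      Set.eq_of_subset_of_ncard_le (SimpleGraph.Subgraph.edgeSet_mono hKle)
        (by omega) (Set.toFinite _)
    have hV : K.verts = H₀.verts :=
      Set.eq_of_subset_of_ncard_le (SimpleGraph.Subgraph.verts_mono hKle)
        (by omega) (Set.toFinite _)
    rcases hKprop with h' | h'
    · exact h' hV
    · exact h' hE
  -- every circuit contains the new edge xy
  have hxy_mem : ∀ C : G'.Subgraph, SubIsCircuit22 C → s(x', y') ∈ C.edgeSet := by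
    intro C hC
    have hC1 := hC.1
    have hne : C.edgeSet.Nonempty := by
      rw [Set.nonempty_iff_ne_empty]
      intro h
      rw [h, Set.ncard_empty] at hC1
      omega
    by_contra hno
    have := sparse_noxy C hno hne
    omega
  -- uniqueness of circuits
  have huniq : ∀ C₁ C₂ : G'.Subgraph, SubIsCircuit22 C₁ → SubIsCircuit22 C₂ → C₁ = C₂ := by
    intro C₁ C₂ h1 h2
    by_contra hne
    have hm1 := hxy_mem C₁ h1
    have hm2 := hxy_mem C₂ h2
    have e1 := h1.1
    have e2 := h2.1
    by_cases hcase : (C₁ ⊓ C₂).verts = C₁.verts ∧ (C₁ ⊓ C₂).edgeSet = C₁.edgeSet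
    · have hv := hcase.1
      rw [SimpleGraph.Subgraph.verts_inf] at hv
      have hVsub : C₁.verts ⊆ C₂.verts := by
        rw [← hv]; exact Set.inter_subset_right
      have he := hcase.2
      rw [SimpleGraph.Subgraph.edgeSet_inf] at he
      have hEsub : C₁.edgeSet ⊆ C₂.edgeSet := by
        rw [← he]; exact Set.inter_subset_right
      have hle : C₁ ≤ C₂ := by
        constructor
        · exact hVsub
        · intro a b hab
          exact SimpleGraph.Subgraph.mem_edgeSet.1
            (hEsub (SimpleGraph.Subgraph.mem_edgeSet.2 hab))
      have hprop : C₁.verts ≠ C₂.verts ∨ C₁.edgeSet ≠ C₂.edgeSet := by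
        by_contra hcon
        push_neg at hcon
        exact hne (subgraph_eq_of_verts_edgeSet hcon.1 hcon.2)
      have := h2.2 C₁ hle hprop ⟨_, hm1⟩
      omega
    · have hprop : (C₁ ⊓ C₂).verts ≠ C₁.verts ∨ (C₁ ⊓ C₂).edgeSet ≠ C₁.edgeSet := by
        by_cases h : (C₁ ⊓ C₂).verts = C₁.verts
        · exact Or.inr (fun h' => hcase ⟨h, h'⟩)
        · exact Or.inl h
      have hAne : (C₁ ⊓ C₂).edgeSet.Nonempty :=
        ⟨s(x', y'), by rw [SimpleGraph.Subgraph.edgeSet_inf]; exact ⟨hm1, hm2⟩⟩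
      have hA := h1.2 (C₁ ⊓ C₂) inf_le_left hprop hAne
      have hBne : (C₁ ⊔ C₂).edgeSet.Nonempty :=
        ⟨s(x', y'), by rw [SimpleGraph.Subgraph.edgeSet_sup]; exact Or.inl hm1⟩
      have hB := sparse' (C₁ ⊔ C₂) hBne
      rw [SimpleGraph.Subgraph.edgeSet_inf, SimpleGraph.Subgraph.verts_inf] at hA
      rw [SimpleGraph.Subgraph.edgeSet_sup, SimpleGraph.Subgraph.verts_sup] at hB
      have hVie := Set.ncard_union_add_ncard_inter C₁.verts C₂.verts
        (Set.toFinite _) (Set.toFinite _)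
      have hEie := Set.ncard_union_add_ncard_inter C₁.edgeSet C₂.edgeSet
        (Set.toFinite _) (Set.toFinite _)
      omega
  refine ⟨⟨H₀, hH₀circ, fun H hH => huniq H H₀ hH hH₀circ⟩, ?_⟩
  intro H hH
  constructor
  · rintro rfl
    constructor
    · have h1 := hH.1
      rw [SimpleGraph.Subgraph.edgeSet_top, SimpleGraph.Subgraph.verts_top,
        Set.ncard_univ, Nat.card_eq_fintype_card] at h1
      exact h1
    · intro K hprop hne
      refine hH.2 K le_top ?_ hne
      rw [SimpleGraph.Subgraph.verts_top, SimpleGraph.Subgraph.edgeSet_top]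
      exact hprop
  · intro hcirc
    have htopcirc : SubIsCircuit22 (⊤ : G'.Subgraph) := by
      constructor
      · rw [SimpleGraph.Subgraph.edgeSet_top, SimpleGraph.Subgraph.verts_top,
          Set.ncard_univ, Nat.card_eq_fintype_card]
        exact hcirc.1
      · intro K hle hprop hne
        refine hcirc.2 K ?_ hne
        rw [SimpleGraph.Subgraph.verts_top, SimpleGraph.Subgraph.edgeSet_top] at hprop
        exact hprop
    exact huniq H ⊤ hH htopcirc
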